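/- arXiv:1409.1499 — 2 statements merged into one kernel-verified Lean document; each statement's English description precedes it below -/
import Mathlib

section
/- For every integer L ≥ 1, E[I^{r_∞}_L] − E[I^{r_L}_L] ≤ −(r_L − r_∞) Σ_{n=1}^L P(n r_∞ ≥ Σ_{i=1}^n D_i). -/
open MeasureTheory ProbabilityTheory Finset

namespace Stmt13Aux

open scoped Fin.NatCast

variable (r : ℝ) (N : ℕ)

/-- partial "walk" value `m*r - sum of first m entries of the periodized tuple x`. -/
noncomputable def Wt (x : Fin (N + 1) → ℝ) (m : ℕ) : ℝ :=
  (m : ℝ) * r - ∑ i ∈ Finset.range m, x (i : Fin (N + 1))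

/-- window max of `Wt` over `[k, k+m]`. -/
noncomputable def Vt (x : Fin (N + 1) → ℝ) (k m : ℕ) : ℝ :=
  (Finset.range (m + 1)).sup' nonempty_range_add_one (fun j => Wt r N x (k + j))

lemma sum_cycle (x : Fin (N + 1) → ℝ) (m : ℕ) :
    ∑ i ∈ Finset.range (N + 1), x ((m + i : ℕ) : Fin (N + 1)) = ∑ i ∈ Finset.range (N + 1), x ((i : ℕ) : Fin (N + 1)) := by
  have key : ∀ m : ℕ, ∑ i ∈ Finset.range (N + 1), x ((m + i : ℕ) : Fin (N + 1))
      = ∑ c : Fin (N + 1), x ((m : Fin (N + 1)) + c) := by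
    intro m
    rw [← Fin.sum_univ_eq_sum_range (fun i : ℕ => x ((m + i : ℕ) : Fin (N + 1))) (N + 1)]
    refine Finset.sum_congr rfl fun i _ => ?_
    congr 1
    push_cast
    rfl
  have h0 := key 0
  simp only [Nat.zero_add, Nat.cast_zero, zero_add] at h0
  rw [key m, h0]
  exact Fintype.sum_bijective (fun c : Fin (N+1) => (m : Fin (N+1)) + c)
    (Equiv.addLeft (m : Fin (N+1))).bijective _ _ (fun c => rfl)

lemma Wt_add (x : Fin (N + 1) → ℝ) (m : ℕ) :
    Wt r N x (m + (N + 1)) = Wt r N x m + Wt r N x (N + 1) := by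
  unfold Wt
  rw [Finset.sum_range_add (fun i : ℕ => x ((i : ℕ) : Fin (N + 1))) m (N + 1)]
  rw [sum_cycle N x m]
  push_cast
  ring

lemma Wt_shift (x : Fin (N + 1) → ℝ) (k m : ℕ) :
    Wt r N (fun i => x (i + (k : Fin (N + 1)))) m = Wt r N x (k + m) - Wt r N x k := by
  unfold Wt
  rw [Finset.sum_range_add (fun i : ℕ => x ((i : ℕ) : Fin (N + 1))) k m]
  have : ∀ i : ℕ, ((i : ℕ) : Fin (N+1)) + (k : Fin (N+1)) = ((k + i : ℕ) : Fin (N + 1)) := by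
    intro i; push_cast; exact add_comm _ _
  simp only [this]
  push_cast
  ring

lemma le_Vt (x : Fin (N + 1) → ℝ) (k m j : ℕ) (hj : j ≤ m) :
    Wt r N x (k + j) ≤ Vt r N x k m := by
  unfold Vt
  exact Finset.le_sup' (fun j => Wt r N x (k + j)) (Finset.mem_range.mpr (Nat.lt_succ_of_le hj))

lemma Vt_le (x : Fin (N + 1) → ℝ) (k m : ℕ) {c : ℝ}
    (hc : ∀ j ≤ m, Wt r N x (k + j) ≤ c) : Vt r N x k m ≤ c := by
  unfold Vt
  exact Finset.sup'_le _ _ fun j hj => hc j (Nat.lt_succ_iff.mp (Finset.mem_range.mp hj))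

lemma Vt_succ (x : Fin (N + 1) → ℝ) (k m : ℕ) :
    Vt r N x k (m + 1) = max (Vt r N x k m) (Wt r N x (k + (m + 1))) := by
  apply le_antisymm
  · apply Vt_le
    intro j hj
    rcases Nat.lt_or_ge j (m + 1) with hj' | hj'
    · exact le_trans (le_Vt r N x k m j (by omega)) (le_max_left _ _)
    · have : j = m + 1 := by omega
      subst this
      exact le_max_right _ _
  · apply max_le
    · exact Vt_le r N x k m fun j hj => le_Vt r N x k (m+1) j (by omega)
    · exact le_Vt r N x k (m+1) (m+1) le_rfl

lemma sup'_add_const {ι : Type*} (s : Finset ι) (hs : s.Nonempty) (f : ι → ℝ) (c : ℝ) :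
    s.sup' hs (fun j => f j + c) = s.sup' hs f + c := by
  apply le_antisymm
  · exact Finset.sup'_le _ _ fun j hj => add_le_add_left (Finset.le_sup' _ hj) c
  · have : s.sup' hs f ≤ s.sup' hs (fun j => f j + c) - c :=
      Finset.sup'_le _ _ fun j hj => le_sub_iff_add_le.mpr (Finset.le_sup' (fun j => f j + c) hj)
    linarith

lemma Vt_shift (x : Fin (N + 1) → ℝ) (k m : ℕ) :
    Vt r N (fun i => x (i + (k : Fin (N + 1)))) 0 m = Vt r N x k m - Wt r N x k := by
  unfold Vt
  have : ∀ j : ℕ, Wt r N (fun i => x (i + (k : Fin (N + 1)))) (0 + j)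
      = Wt r N x (k + j) + (- Wt r N x k) := by
    intro j; rw [Nat.zero_add, Wt_shift]; ring
  simp only [this]
  rw [sup'_add_const]
  ring

/-- The key combinatorial (cyclic) lemma. -/
lemma cyclic_sum (x : Fin (N + 1) → ℝ) :
    ∑ k ∈ Finset.range (N + 1), max (Wt r N x (k + (N + 1)) - Vt r N x k N) 0
      = max (Wt r N x (N + 1)) 0 := by
  rcases le_or_gt (Wt r N x (N + 1)) 0 with hn | hn
  · have hz : ∀ k ∈ Finset.range (N + 1), max (Wt r N x (k + (N + 1)) - Vt r N x k N) 0 = 0 := by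
      intro k _
      apply max_eq_right
      have h1 : Wt r N x (k + (N + 1)) ≤ Wt r N x k := by
        rw [Wt_add]; linarith
      have h2 : Wt r N x k ≤ Vt r N x k N := by
        have := le_Vt r N x k N 0 (Nat.zero_le N); simpa using this
      linarith
    rw [Finset.sum_congr rfl hz, Finset.sum_const, smul_zero]
    exact (max_eq_right hn).symm
  · have key : ∀ k : ℕ, max (Wt r N x (k + (N + 1)) - Vt r N x k N) 0
        = Vt r N x (k + 1) N - Vt r N x k N := by
      intro k
      have h1 : max (Wt r N x (k + (N + 1))) (Vt r N x k N) = Vt r N x (k + 1) N := by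
        have hlt : Wt r N x k < Wt r N x (k + (N + 1)) := by
          rw [Wt_add]; linarith
        apply le_antisymm
        · apply max_le
          · have : k + (N + 1) = (k + 1) + N := by omega
            rw [this]
            exact le_Vt r N x (k + 1) N N le_rfl
          · apply Vt_le
            intro j hj
            rcases Nat.eq_zero_or_pos j with hj0 | hjpos
            · subst hj0
              have : k + (N + 1) = (k + 1) + N := by omega
              calc Wt r N x (k + 0) = Wt r N x k := by rw [Nat.add_zero]
                _ ≤ Wt r N x (k + (N + 1)) := le_of_lt hlt
                _ = Wt r N x ((k + 1) + N) := by rw [this]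
                _ ≤ Vt r N x (k + 1) N := le_Vt r N x (k + 1) N N le_rfl
            · obtain ⟨j', rfl⟩ := Nat.exists_eq_add_of_le hjpos
              have : k + (1 + j') = (k + 1) + j' := by omega
              rw [this]
              exact le_Vt r N x (k + 1) N j' (by omega)
        · apply Vt_le
          intro j hj
          rcases Nat.lt_or_ge j N with hjN | hjN
          · have : (k + 1) + j = k + (j + 1) := by omega
            rw [this]
            exact le_trans (le_Vt r N x k N (j + 1) (by omega)) (le_max_right _ _)
          · have hjeq : (k + 1) + j = k + (N + 1) := by omega
            rw [hjeq]
            exact le_max_left _ _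
      have h0 : (0 : ℝ) = Vt r N x k N - Vt r N x k N := by ring
      rw [h0, max_sub_sub_right, h1]
    rw [Finset.sum_congr rfl (fun k _ => key k)]
    rw [Finset.sum_range_sub (fun k => Vt r N x k N)]
    have hV : Vt r N x (N + 1) N = Vt r N x 0 N + Wt r N x (N + 1) := by
      unfold Vt
      have : ∀ j : ℕ, Wt r N x ((N + 1) + j) = Wt r N x (0 + j) + Wt r N x (N + 1) := by
        intro j
        rw [add_comm (N + 1) j, Wt_add, Nat.zero_add]
      simp only [this]
      rw [sup'_add_const]
    rw [hV, max_eq_left (le_of_lt hn)]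
    ring


/-! ### Measure-theoretic part -/

lemma hlaw {Ω : Type*} [MeasurableSpace Ω] (μ : Measure Ω) [IsProbabilityMeasure μ]
    (D : ℕ → Ω → ℝ) (hmeas : ∀ i, Measurable (D i))
    (hindep : iIndepFun D μ)
    (hident : ∀ i, IdentDistrib (D i) (D 0) μ μ) (n : ℕ) :
    μ.map (fun ω (i : Fin n) => D (i : ℕ) ω) = Measure.pi (fun _ : Fin n => μ.map (D 0)) := by
  classical
  haveI : IsProbabilityMeasure (μ.map (D 0)) := Measure.isProbabilityMeasure_map (hmeas 0).aemeasurable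
  have hT : Measurable (fun ω (i : Fin n) => D (i : ℕ) ω) :=
    measurable_pi_lambda _ fun i => hmeas i
  refine (Measure.pi_eq (μ := fun _ : Fin n => μ.map (D 0)) fun s hs => ?_).symm
  rw [Measure.map_apply hT (MeasurableSet.univ_pi hs)]
  set sets : ℕ → Set ℝ := fun i => if h : i < n then s ⟨i, h⟩ else Set.univ with hsets
  have hpre : (fun ω (i : Fin n) => D (i : ℕ) ω) ⁻¹' Set.pi Set.univ s
      = ⋂ i ∈ Finset.range n, D i ⁻¹' sets i := by
    ext ω
    simp only [Set.mem_preimage, Set.mem_pi, Set.mem_univ, forall_true_left, Set.mem_iInter,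
      Finset.mem_range]
    constructor
    · intro hx i hi
      simp only [hsets, Set.mem_preimage, dif_pos hi]
      exact hx ⟨i, hi⟩
    · intro hx i
      have := hx (i : ℕ) i.isLt
      simp only [hsets, Set.mem_preimage, dif_pos i.isLt, Fin.eta] at this
      exact this
  have hmset : ∀ i ∈ Finset.range n, MeasurableSet (sets i) := by
    intro i _
    simp only [hsets]
    split
    · exact hs _
    · exact MeasurableSet.univ
  rw [hpre, hindep.measure_inter_preimage_eq_mul (Finset.range n) hmset]
  rw [← Fin.prod_univ_eq_prod_range (fun i => μ (D i ⁻¹' sets i)) n]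
  refine Finset.prod_congr rfl fun i _ => ?_
  have h1 : sets (i : ℕ) = s i := by
    simp only [hsets, dif_pos i.isLt, Fin.eta]
  calc μ (D (i : ℕ) ⁻¹' sets (i : ℕ)) = (μ.map (D (i : ℕ))) (s i) := by
        rw [h1, Measure.map_apply (hmeas _) (hs i)]
    _ = (μ.map (D 0)) (s i) := by rw [(hident _).map_eq]

lemma shift_pres (ν : Measure ℝ) [IsProbabilityMeasure ν] (n : ℕ) [NeZero n] (c : Fin n) :
    MeasurePreserving (fun x : Fin n → ℝ => fun i => x (i + c))
      (Measure.pi fun _ => ν) (Measure.pi fun _ => ν) := by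
  have hm : Measurable (fun x : Fin n → ℝ => fun i => x (i + c)) :=
    measurable_pi_lambda _ fun i => measurable_pi_apply _
  refine ⟨hm, ?_⟩
  refine (Measure.pi_eq (μ := fun _ : Fin n => ν) fun s hs => ?_).symm
  rw [Measure.map_apply hm (MeasurableSet.univ_pi hs)]
  have hpre : (fun x : Fin n → ℝ => fun i => x (i + c)) ⁻¹' Set.pi Set.univ s
      = Set.pi Set.univ (fun j => s (j - c)) := by
    ext x
    simp only [Set.mem_preimage, Set.mem_pi, Set.mem_univ, forall_true_left]
    constructor
    · intro hx j
      have := hx (j - c)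
      rwa [sub_add_cancel] at this
    · intro hx i
      have := hx (i + c)
      rwa [add_sub_cancel_right] at this
  rw [hpre, Measure.pi_pi]
  exact Fintype.prod_bijective (fun j : Fin n => j - c) (Equiv.subRight c).bijective
    (fun j => ν (s (j - c))) (fun i => ν (s i)) (fun j => rfl)


/-! ### Ω-side -/

lemma sup'_range_one (f : ℕ → ℝ) :
    (Finset.range 1).sup' nonempty_range_add_one f = f 0 := by
  apply le_antisymm
  · apply Finset.sup'_le
    intro j hj
    have : j = 0 := by have := Finset.mem_range.mp hj; omega
    rw [this]
  · exact Finset.le_sup' f (Finset.mem_range.mpr (by omega))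

lemma sup'_range_succ (f : ℕ → ℝ) (m : ℕ) :
    (Finset.range (m + 2)).sup' nonempty_range_add_one f
      = max ((Finset.range (m + 1)).sup' nonempty_range_add_one f) (f (m + 1)) := by
  apply le_antisymm
  · apply Finset.sup'_le
    intro j hj
    have hj' := Finset.mem_range.mp hj
    rcases Nat.lt_or_ge j (m + 1) with h | h
    · exact le_trans (Finset.le_sup' f (Finset.mem_range.mpr h)) (le_max_left _ _)
    · have : j = m + 1 := by omega
      rw [this]
      exact le_max_right _ _
  · apply max_le
    · apply Finset.sup'_le
      intro j hj
      exact Finset.le_sup' f (Finset.mem_range.mpr (by have := Finset.mem_range.mp hj; omega))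
    · exact Finset.le_sup' f (Finset.mem_range.mpr (by omega))

variable {Ω : Type*} [MeasurableSpace Ω] (μ : Measure Ω) [IsProbabilityMeasure μ]
  (D : ℕ → Ω → ℝ)

lemma MS_int (hmeas : ∀ i, Measurable (D i)) (hDi : ∀ i, Integrable (D i) μ) (r : ℝ) :
    ∀ m : ℕ, Integrable (fun ω => (Finset.range (m + 1)).sup' nonempty_range_add_one
      (fun j => (j : ℝ) * r - ∑ i ∈ Finset.range j, D i ω)) μ := by
  have hW : ∀ j : ℕ, Integrable (fun ω => (j : ℝ) * r - ∑ i ∈ Finset.range j, D i ω) μ :=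
    fun j => (integrable_const _).sub (integrable_finset_sum _ fun i _ => hDi i)
  intro m
  induction m with
  | zero =>
    have heq : (fun ω => (Finset.range 1).sup' nonempty_range_add_one
        (fun j => (j : ℝ) * r - ∑ i ∈ Finset.range j, D i ω)) =
        fun ω => (0 : ℝ) * r - ∑ i ∈ Finset.range 0, D i ω := by
      funext ω
      rw [sup'_range_one]
      norm_num
    rw [heq]
    simpa using hW 0
  | succ m ih =>
    have heq : (fun ω => (Finset.range (m + 2)).sup' nonempty_range_add_one
        (fun j => (j : ℝ) * r - ∑ i ∈ Finset.range j, D i ω)) =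
        fun ω => max ((Finset.range (m + 1)).sup' nonempty_range_add_one
          (fun j => (j : ℝ) * r - ∑ i ∈ Finset.range j, D i ω))
          (((m : ℝ) + 1) * r - ∑ i ∈ Finset.range (m + 1), D i ω) := by
      funext ω
      rw [sup'_range_succ]
      norm_num
    rw [heq]
    have h2 := ih.sup (hW (m + 1))
    refine h2.congr (Filter.Eventually.of_forall fun ω => ?_)
    show _ ⊔ _ = _
    push_cast
    rfl

lemma bridge (r : ℝ) (N : ℕ) (ω : Ω) {m : ℕ} (hm : m ≤ N + 1) :
    Vt r N (fun i : Fin (N + 1) => D (i : ℕ) ω) 0 m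
      = (Finset.range (m + 1)).sup' nonempty_range_add_one
          (fun j => (j : ℝ) * r - ∑ i ∈ Finset.range j, D i ω) := by
  unfold Vt Wt
  refine Finset.sup'_congr nonempty_range_add_one rfl fun j hj => ?_
  rw [Nat.zero_add]
  congr 1
  refine Finset.sum_congr rfl fun i hi => ?_
  have hi' : i < N + 1 := by
    have h1 := Finset.mem_range.mp hi
    have h2 := Finset.mem_range.mp hj
    omega
  show D (((i : ℕ) : Fin (N + 1)) : ℕ) ω = D i ω
  rw [Fin.val_cast_of_lt hi']

lemma step (hmeas : ∀ i, Measurable (D i))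
    (hindep : iIndepFun D μ)
    (hident : ∀ i, IdentDistrib (D i) (D 0) μ μ)
    (hDi : ∀ i, Integrable (D i) μ) (r : ℝ) (N : ℕ) :
    ((N : ℝ) + 1) * ((∫ ω, (Finset.range (N + 2)).sup' nonempty_range_add_one
          (fun j => (j : ℝ) * r - ∑ i ∈ Finset.range j, D i ω) ∂μ)
        - ∫ ω, (Finset.range (N + 1)).sup' nonempty_range_add_one
          (fun j => (j : ℝ) * r - ∑ i ∈ Finset.range j, D i ω) ∂μ)
      = ∫ ω, max (((N : ℝ) + 1) * r - ∑ i ∈ Finset.range (N + 1), D i ω) 0 ∂μ := by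
  haveI : IsProbabilityMeasure (μ.map (D 0)) := Measure.isProbabilityMeasure_map (hmeas 0).aemeasurable
  set ν := μ.map (D 0) with hνdef
  set π := Measure.pi (fun _ : Fin (N + 1) => ν) with hπdef
  set T : Ω → (Fin (N + 1) → ℝ) := fun ω i => D (i : ℕ) ω with hTdef
  have hT : Measurable T := measurable_pi_lambda _ fun i => hmeas _
  have hπ : μ.map T = π := hlaw μ D hmeas hindep hident (N + 1)
  have hWm : ∀ m : ℕ, Measurable (fun x : Fin (N + 1) → ℝ => Wt r N x m) := by
    intro m
    unfold Wt
    exact measurable_const.sub (Finset.measurable_sum _ fun i _ => measurable_pi_apply _)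
  have hVm : ∀ k m : ℕ, Measurable (fun x : Fin (N + 1) → ℝ => Vt r N x k m) := by
    intro k m
    have heq : (fun x : Fin (N + 1) → ℝ => Vt r N x k m)
        = (Finset.range (m + 1)).sup' nonempty_range_add_one (fun j x => Wt r N x (k + j)) := by
      funext x
      rw [Finset.sup'_apply]
      rfl
    rw [heq]
    exact Finset.measurable_sup' _ fun j _ => hWm _
  set G : (Fin (N + 1) → ℝ) → ℝ := fun x => Vt r N x 0 (N + 1) - Vt r N x 0 N with hGdef
  have hG : Measurable G := (hVm 0 (N + 1)).sub (hVm 0 N)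
  have hGT : ∀ ω, G (T ω) = (Finset.range (N + 2)).sup' nonempty_range_add_one
      (fun j => (j : ℝ) * r - ∑ i ∈ Finset.range j, D i ω)
      - (Finset.range (N + 1)).sup' nonempty_range_add_one
      (fun j => (j : ℝ) * r - ∑ i ∈ Finset.range j, D i ω) := by
    intro ω
    have b1 := bridge D r N ω (le_refl (N + 1))
    have b2 := bridge D r N ω (Nat.le_succ N)
    simp only [hGdef, hTdef]
    rw [b1, b2]
  have hMS := MS_int μ D hmeas hDi r
  have hGTint : Integrable (fun ω => G (T ω)) μ := by
    have heq : (fun ω => G (T ω)) = fun ω => ((Finset.range (N + 2)).sup' nonempty_range_add_one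
        (fun j => (j : ℝ) * r - ∑ i ∈ Finset.range j, D i ω)
        - (Finset.range (N + 1)).sup' nonempty_range_add_one
        (fun j => (j : ℝ) * r - ∑ i ∈ Finset.range j, D i ω)) := funext hGT
    rw [heq]
    exact (hMS (N + 1)).sub (hMS N)
  have hGπ : Integrable G π := by
    rw [← hπ]
    exact (integrable_map_measure hG.aestronglyMeasurable hT.aemeasurable).mpr hGTint
  set σf : ℕ → (Fin (N + 1) → ℝ) → (Fin (N + 1) → ℝ) :=
    fun k x i => x (i + (k : Fin (N + 1))) with hσdef
  have hσ : ∀ k : ℕ, MeasurePreserving (σf k) π π := fun k =>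
    shift_pres ν (N + 1) ((k : Fin (N + 1)))
  have hσint : ∀ k : ℕ, Integrable (fun x => G (σf k x)) π := fun k =>
    ((hσ k).integrable_comp hG.aestronglyMeasurable).mpr hGπ
  have hsame : ∀ k : ℕ, ∫ x, G (σf k x) ∂π = ∫ x, G x ∂π := by
    intro k
    conv_rhs => rw [← (hσ k).map_eq]
    exact (integral_map (hσ k).measurable.aemeasurable hG.aestronglyMeasurable).symm
  have hkey : ∀ x, ∑ k ∈ Finset.range (N + 1), G (σf k x) = max (Wt r N x (N + 1)) 0 := by
    intro x
    rw [← cyclic_sum r N x]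
    refine Finset.sum_congr rfl fun k _ => ?_
    have h1 : G (σf k x) = Vt r N x k (N + 1) - Vt r N x k N := by
      simp only [hGdef, hσdef]
      rw [Vt_shift r N x k (N + 1), Vt_shift r N x k N]
      ring
    rw [h1, Vt_succ r N x k N]
    have h0 : (0 : ℝ) = Vt r N x k N - Vt r N x k N := by ring
    rw [h0, max_sub_sub_right, max_comm]
  have e0 : (∫ ω, (Finset.range (N + 2)).sup' nonempty_range_add_one
        (fun j => (j : ℝ) * r - ∑ i ∈ Finset.range j, D i ω) ∂μ)
      - (∫ ω, (Finset.range (N + 1)).sup' nonempty_range_add_one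
        (fun j => (j : ℝ) * r - ∑ i ∈ Finset.range j, D i ω) ∂μ) = ∫ x, G x ∂π := by
    rw [← integral_sub (hMS (N + 1)) (hMS N), ← hπ,
      integral_map hT.aemeasurable hG.aestronglyMeasurable]
    exact integral_congr_ae (Filter.Eventually.of_forall fun ω => (hGT ω).symm)
  rw [e0]
  have h2 : ((N : ℝ) + 1) * ∫ x, G x ∂π = ∑ k ∈ Finset.range (N + 1), ∫ x, G (σf k x) ∂π := by
    rw [Finset.sum_congr rfl fun k _ => hsame k, Finset.sum_const, Finset.card_range,
      nsmul_eq_mul]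
    push_cast
    ring
  rw [h2, ← integral_finset_sum _ (fun k _ => hσint k)]
  have h3 : (fun x => ∑ k ∈ Finset.range (N + 1), G (σf k x))
      = fun x => max (Wt r N x (N + 1)) 0 := funext hkey
  rw [h3, ← hπ, integral_map hT.aemeasurable
    (((hWm (N + 1)).max measurable_const).aestronglyMeasurable)]
  refine integral_congr_ae (Filter.Eventually.of_forall fun ω => ?_)
  have hw : Wt r N (T ω) (N + 1) = ((N : ℝ) + 1) * r - ∑ i ∈ Finset.range (N + 1), D i ω := by
    unfold Wt
    simp only [hTdef]
    have : ∀ i ∈ Finset.range (N + 1), D (((i : ℕ) : Fin (N + 1)) : ℕ) ω = D i ω := by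
      intro i hi
      rw [Fin.val_cast_of_lt (Finset.mem_range.mp hi)]
    rw [Finset.sum_congr rfl this]
    push_cast
    ring
  show max (Wt r N (T ω) (N + 1)) 0 = _
  rw [hw]

lemma main_ineq (hmeas : ∀ i, Measurable (D i))
    (hindep : iIndepFun D μ)
    (hident : ∀ i, IdentDistrib (D i) (D 0) μ μ)
    (hDi : ∀ i, Integrable (D i) μ) (r' r : ℝ) (m : ℕ) :
    (r' - r) * ∑ n ∈ Finset.Icc 1 m,
        (μ {ω | (n : ℝ) * r ≥ ∑ i ∈ Finset.range n, D i ω}).toReal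
      ≤ (∫ ω, (Finset.range (m + 1)).sup' nonempty_range_add_one
          (fun j => (j : ℝ) * r' - ∑ i ∈ Finset.range j, D i ω) ∂μ)
        - ∫ ω, (Finset.range (m + 1)).sup' nonempty_range_add_one
          (fun j => (j : ℝ) * r - ∑ i ∈ Finset.range j, D i ω) ∂μ := by
  induction m with
  | zero =>
    have h0 : ∀ s : ℝ, (fun ω : Ω => (Finset.range 1).sup' nonempty_range_add_one
        (fun j => (j : ℝ) * s - ∑ i ∈ Finset.range j, D i ω)) = fun _ => (0 : ℝ) := by
      intro s
      funext ω
      rw [sup'_range_one]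
      norm_num
    rw [h0 r', h0 r]
    simp
  | succ m ih =>
    have hc : (0 : ℝ) < (m : ℝ) + 1 := by positivity
    have hstep' := step μ D hmeas hindep hident hDi r' m
    have hstep := step μ D hmeas hindep hident hDi r m
    set A : Set Ω := {ω | ((m : ℝ) + 1) * r ≥ ∑ i ∈ Finset.range (m + 1), D i ω} with hAdef
    have hA : MeasurableSet A := by
      have : A = {ω | (∑ i ∈ Finset.range (m + 1), D i ω) ≤ ((m : ℝ) + 1) * r} := by
        ext ω; simp [hAdef, ge_iff_le]
      rw [this]
      exact measurableSet_le (Finset.measurable_sum _ fun i _ => hmeas i) measurable_const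
    have hmax : ∀ s : ℝ, Integrable
        (fun ω => max (((m : ℝ) + 1) * s - ∑ i ∈ Finset.range (m + 1), D i ω) 0) μ := by
      intro s
      have h1 : Integrable (fun ω => ((m : ℝ) + 1) * s - ∑ i ∈ Finset.range (m + 1), D i ω) μ :=
        (integrable_const _).sub (integrable_finset_sum _ fun i _ => hDi i)
      have := h1.sup (integrable_const (0 : ℝ))
      refine this.congr (Filter.Eventually.of_forall fun ω => ?_)
      rfl
    have hind : Integrable (fun ω => Set.indicator A
        (fun _ => ((m : ℝ) + 1) * (r' - r)) ω) μ :=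
      (integrable_const _).indicator hA
    have hpw : ∀ ω, Set.indicator A (fun _ => ((m : ℝ) + 1) * (r' - r)) ω
        ≤ max (((m : ℝ) + 1) * r' - ∑ i ∈ Finset.range (m + 1), D i ω) 0
          - max (((m : ℝ) + 1) * r - ∑ i ∈ Finset.range (m + 1), D i ω) 0 := by
      intro ω
      by_cases hω : ω ∈ A
      · rw [Set.indicator_of_mem hω]
        have ha : (0 : ℝ) ≤ ((m : ℝ) + 1) * r - ∑ i ∈ Finset.range (m + 1), D i ω := by
          have := hω
          simp only [hAdef, ge_iff_le, Set.mem_setOf_eq] at this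
          linarith
        rw [max_eq_left ha]
        have := le_max_left (((m : ℝ) + 1) * r' - ∑ i ∈ Finset.range (m + 1), D i ω) (0 : ℝ)
        linarith
      · rw [Set.indicator_of_notMem hω]
        have ha : ((m : ℝ) + 1) * r - ∑ i ∈ Finset.range (m + 1), D i ω ≤ 0 := by
          simp only [hAdef, ge_iff_le, Set.mem_setOf_eq, not_le] at hω
          linarith
        rw [max_eq_right ha]
        simp only [sub_zero]
        exact le_max_right _ _
    have hineq : ((m : ℝ) + 1) * (r' - r) * (μ A).toReal
        ≤ (∫ ω, max (((m : ℝ) + 1) * r' - ∑ i ∈ Finset.range (m + 1), D i ω) 0 ∂μ)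
          - ∫ ω, max (((m : ℝ) + 1) * r - ∑ i ∈ Finset.range (m + 1), D i ω) 0 ∂μ := by
      have h4 : ∫ ω, Set.indicator A (fun _ => ((m : ℝ) + 1) * (r' - r)) ω ∂μ
          = ((m : ℝ) + 1) * (r' - r) * (μ A).toReal := by
        rw [integral_indicator_const _ hA, smul_eq_mul, measureReal_def]
        ring
      rw [← h4, ← integral_sub (hmax r') (hmax r)]
      exact integral_mono hind ((hmax r').sub (hmax r)) hpw
    have hsum : ∑ n ∈ Finset.Icc 1 (m + 1),
        (μ {ω | (n : ℝ) * r ≥ ∑ i ∈ Finset.range n, D i ω}).toReal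
        = (∑ n ∈ Finset.Icc 1 m,
            (μ {ω | (n : ℝ) * r ≥ ∑ i ∈ Finset.range n, D i ω}).toReal) + (μ A).toReal := by
      rw [Finset.sum_Icc_succ_top (by omega : 1 ≤ m + 1)]
      congr 2
      simp only [hAdef]
      norm_cast
    rw [hsum]
    have hstep2' : ((m : ℝ) + 1) * ((∫ ω, (Finset.range (m + 1 + 1)).sup' nonempty_range_add_one
          (fun j => (j : ℝ) * r' - ∑ i ∈ Finset.range j, D i ω) ∂μ)
        - ∫ ω, (Finset.range (m + 1)).sup' nonempty_range_add_one
          (fun j => (j : ℝ) * r' - ∑ i ∈ Finset.range j, D i ω) ∂μ)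
      = ∫ ω, max (((m : ℝ) + 1) * r' - ∑ i ∈ Finset.range (m + 1), D i ω) 0 ∂μ := hstep'
    have hstep2 : ((m : ℝ) + 1) * ((∫ ω, (Finset.range (m + 1 + 1)).sup' nonempty_range_add_one
          (fun j => (j : ℝ) * r - ∑ i ∈ Finset.range j, D i ω) ∂μ)
        - ∫ ω, (Finset.range (m + 1)).sup' nonempty_range_add_one
          (fun j => (j : ℝ) * r - ∑ i ∈ Finset.range j, D i ω) ∂μ)
      = ∫ ω, max (((m : ℝ) + 1) * r - ∑ i ∈ Finset.range (m + 1), D i ω) 0 ∂μ := hstep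
    clear hstep' hstep
    set P' := ∫ ω, (Finset.range (m + 1 + 1)).sup' nonempty_range_add_one
      (fun j => (j : ℝ) * r' - ∑ i ∈ Finset.range j, D i ω) ∂μ
    set P := ∫ ω, (Finset.range (m + 1 + 1)).sup' nonempty_range_add_one
      (fun j => (j : ℝ) * r - ∑ i ∈ Finset.range j, D i ω) ∂μ
    set Q' := ∫ ω, (Finset.range (m + 1)).sup' nonempty_range_add_one
      (fun j => (j : ℝ) * r' - ∑ i ∈ Finset.range j, D i ω) ∂μ
    set Q := ∫ ω, (Finset.range (m + 1)).sup' nonempty_range_add_one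
      (fun j => (j : ℝ) * r - ∑ i ∈ Finset.range j, D i ω) ∂μ
    set Sm := ∑ n ∈ Finset.Icc 1 m,
      (μ {ω | (n : ℝ) * r ≥ ∑ i ∈ Finset.range n, D i ω}).toReal
    set t := (μ A).toReal
    have goal' : ((m : ℝ) + 1) * ((r' - r) * (Sm + t)) ≤ ((m : ℝ) + 1) * (P' - P) := by
      have hih := mul_le_mul_of_nonneg_left ih hc.le
      nlinarith [hstep2', hstep2, hineq, hih]
    have := (mul_le_mul_iff_of_pos_left hc).mp goal'
    linarith

end Stmt13Aux

/-- For every `L ≥ 1`,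
`E[I^{r_∞}_L] − E[I^{r_L}_L] ≤ −(r_L − r_∞) Σ_{n=1}^L P(n r_∞ ≥ Σ_{i=1}^n D_i)`. -/
theorem stmt13
    {Ω : Type*} [MeasurableSpace Ω] (μ : Measure Ω) [IsProbabilityMeasure μ]
    (D : ℕ → Ω → ℝ)
    (hmeas : ∀ i, Measurable (D i))
    (hindep : iIndepFun D μ)
    (hident : ∀ i, IdentDistrib (D i) (D 0) μ μ)
    (hnonneg : ∀ i ω, 0 ≤ D i ω)
    (hint : Integrable (D 0) μ)
    (hmean : 0 < ∫ ω, D 0 ω ∂μ)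
    (hvar : 0 < variance (D 0) μ)
    (h p : ℝ) (hh : 0 < h) (hp : 0 < p)
    (L : ℕ) (hL : 1 ≤ L)
    (CL Cinf : ℝ → ℝ)
    (hCL : ∀ r, CL r = h * (∫ ω, (Finset.range (L + 1)).sup' (by simp)
        (fun j => (j : ℝ) * r - ∑ i ∈ Finset.range j, D i ω) ∂μ)
      + p * (∫ ω, D 0 ω ∂μ) - p * r)
    (hCinf : ∀ r, Cinf r
      = h * (∫ ω, (⨆ j : ℕ, ((j : ℝ) * r - ∑ i ∈ Finset.range j, D i ω)) ∂μ)
      + p * (∫ ω, D 0 ω ∂μ) - p * r)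
    (rL rinf : ℝ)
    (hrL : rL = sInf {r | r ∈ Set.Icc (0 : ℝ) (∫ ω, D 0 ω ∂μ) ∧
      ∀ r' ∈ Set.Icc (0 : ℝ) (∫ ω, D 0 ω ∂μ), CL r ≤ CL r'})
    (hrinf : rinf = sInf {r | r ∈ Set.Ico (0 : ℝ) (∫ ω, D 0 ω ∂μ) ∧
      ∀ r' ∈ Set.Ico (0 : ℝ) (∫ ω, D 0 ω ∂μ), Cinf r ≤ Cinf r'}) :
    (∫ ω, (Finset.range (L + 1)).sup' (by simp)
        (fun j => (j : ℝ) * rinf - ∑ i ∈ Finset.range j, D i ω) ∂μ)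
      - (∫ ω, (Finset.range (L + 1)).sup' (by simp)
          (fun j => (j : ℝ) * rL - ∑ i ∈ Finset.range j, D i ω) ∂μ)
      ≤ -(rL - rinf) * ∑ n ∈ Finset.Icc 1 L,
          (μ {ω | (n : ℝ) * rinf ≥ ∑ i ∈ Finset.range n, D i ω}).toReal := by
  have hDi : ∀ i, Integrable (D i) μ := fun i => (hident i).integrable_iff.mpr hint
  have key := Stmt13Aux.main_ineq μ D hmeas hindep hident hDi rL rinf L
  linarith [key]
end

section
/- Suppose D is exponentially distributed with rate λ > 0, let h, p > 0, set τ := √(h/(2p + h)) and r_∞ := λ^{−1}(1 − τ). Then the function φ(θ) := exp(θ r_∞) E[exp(−θ D)] = exp(λ^{−1}(1 − τ) θ) · λ/(λ + θ) on [0, ∞) attains its infimum at the unique point ϑ = τ λ / (1 − τ), and γ := inf_{θ ≥ 0} φ(θ) = (1 − τ) exp(τ), which lies in (0, 1). -/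
open MeasureTheory ProbabilityTheory

lemma expMeasure_mgf {lam θ : ℝ} (hlam : 0 < lam) (hθ : 0 ≤ θ) :
    ∫ x, Real.exp (-θ * x) ∂(expMeasure lam) = lam / (lam + θ) := by
  have hlt : 0 < lam + θ := by linarith
  have hm0 : Measurable fun x : ℝ => Real.exp (-θ * x) :=
    Real.measurable_exp.comp ((measurable_id.const_mul (-θ)))
  have hmes : Measurable fun x : ℝ => ENNReal.ofReal (Real.exp (-θ * x)) :=
    ENNReal.measurable_ofReal.comp hm0
  rw [integral_eq_lintegral_of_nonneg_ae (ae_of_all _ fun x => (Real.exp_pos _).le)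
    hm0.aestronglyMeasurable]
  have hmd : ∀ r : ℝ, Measurable (exponentialPDF r) := fun r =>
    (measurable_exponentialPDFReal r).ennreal_ofReal
  have hrw : expMeasure lam = volume.withDensity (exponentialPDF lam) := rfl
  rw [hrw, lintegral_withDensity_eq_lintegral_mul _ (hmd lam) hmes]
  have hpt : ∀ x : ℝ, exponentialPDF lam x * ENNReal.ofReal (Real.exp (-θ * x))
      = ENNReal.ofReal (lam / (lam + θ)) * exponentialPDF (lam + θ) x := by
    intro x
    rcases le_or_gt 0 x with hx | hx
    · rw [exponentialPDF_of_nonneg hx, exponentialPDF_of_nonneg hx,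
        ← ENNReal.ofReal_mul (by positivity), ← ENNReal.ofReal_mul (by positivity)]
      congr 1
      rw [mul_assoc, ← Real.exp_add, ← mul_assoc, div_mul_cancel₀ _ hlt.ne']
      ring_nf
    · rw [exponentialPDF_of_neg hx, exponentialPDF_of_neg hx, zero_mul, mul_zero]
  simp only [Pi.mul_apply]
  simp_rw [hpt]
  rw [lintegral_const_mul _ (hmd (lam+θ)), lintegral_exponentialPDF_eq_one hlt,
    mul_one, ENNReal.toReal_ofReal (by positivity)]

/-- **The exponential rate under exponential demand.** With `D` exponential of rate `λ > 0`,
`τ = √(h/(2p+h))` and `r_∞ = (1 − τ)/λ`, the function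
`φ(θ) = exp(θ r_∞) E[exp(−θ D)] = exp((1 − τ)θ/λ) · λ/(λ + θ)` on `[0, ∞)` attains its
infimum at the unique point `ϑ = τ λ/(1 − τ)`, and
`γ = inf_{θ ≥ 0} φ(θ) = (1 − τ) exp(τ) ∈ (0, 1)`. -/
theorem stmt17
    {Ω : Type*} [MeasurableSpace Ω] (μ : Measure Ω) [IsProbabilityMeasure μ]
    (lam : ℝ) (hlam : 0 < lam)
    (D : Ω → ℝ) (hmeas : Measurable D) (hexp : μ.map D = expMeasure lam)
    (h p : ℝ) (hh : 0 < h) (hp : 0 < p)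
    (τ : ℝ) (hτ : τ = Real.sqrt (h / (2 * p + h)))
    (rinf : ℝ) (hrinf : rinf = (1 - τ) / lam)
    (φ : ℝ → ℝ) (hφ : ∀ θ, φ θ = Real.exp (θ * rinf) * ∫ ω, Real.exp (-θ * D ω) ∂μ)
    (ϑ : ℝ) (hϑ : ϑ = τ * lam / (1 - τ)) :
    (∀ θ : ℝ, 0 ≤ θ →
      φ θ = Real.exp ((1 - τ) / lam * θ) * (lam / (lam + θ))) ∧
    (∀ θ : ℝ, 0 ≤ θ → φ ϑ ≤ φ θ) ∧
    (∀ θ : ℝ, 0 ≤ θ → (∀ θ' : ℝ, 0 ≤ θ' → φ θ ≤ φ θ') → θ = ϑ) ∧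
    sInf (φ '' Set.Ici (0 : ℝ)) = (1 - τ) * Real.exp τ ∧
    0 < (1 - τ) * Real.exp τ ∧ (1 - τ) * Real.exp τ < 1 := by
  -- basic facts about τ
  have harg0 : 0 < h / (2 * p + h) := by positivity
  have harg1 : h / (2 * p + h) < 1 := by
    rw [div_lt_one (by linarith)]; linarith
  have hτ0 : 0 < τ := hτ ▸ Real.sqrt_pos.mpr harg0
  have hτ1 : τ < 1 := by
    rw [hτ]
    calc Real.sqrt (h / (2 * p + h)) < Real.sqrt 1 :=
          Real.sqrt_lt_sqrt harg0.le harg1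
      _ = 1 := Real.sqrt_one
  have h1τ : 0 < 1 - τ := by linarith
  have hϑ0 : 0 < ϑ := by rw [hϑ]; positivity
  -- formula for φ on [0,∞)
  have hform : ∀ θ : ℝ, 0 ≤ θ →
      φ θ = Real.exp ((1 - τ) / lam * θ) * (lam / (lam + θ)) := by
    intro θ hθ
    have hint : ∫ ω, Real.exp (-θ * D ω) ∂μ = lam / (lam + θ) := by
      rw [← expMeasure_mgf hlam hθ, ← hexp]
      have hms : AEStronglyMeasurable (fun x : ℝ => Real.exp (-θ * x)) (μ.map D) :=
        (Real.measurable_exp.comp (measurable_id.const_mul (-θ))).aestronglyMeasurable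
      exact (integral_map hmeas.aemeasurable hms).symm
    rw [hφ, hint, hrinf]
    ring_nf
  -- value at ϑ
  have hlamϑ : lam + ϑ = lam / (1 - τ) := by
    rw [hϑ]; field_simp; ring
  have hval : φ ϑ = (1 - τ) * Real.exp τ := by
    rw [hform ϑ hϑ0.le, hlamϑ]
    have h1 : (1 - τ) / lam * ϑ = τ := by
      rw [hϑ]; field_simp
    have h2 : lam / (lam / (1 - τ)) = 1 - τ := by
      field_simp
    rw [h1, h2, mul_comm]
  -- strict minimality off ϑ
  have hkey : ∀ θ : ℝ, 0 ≤ θ → θ ≠ ϑ → φ ϑ < φ θ := by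
    intro θ hθ hne
    set x : ℝ := (1 - τ) / lam * θ - τ with hx
    have hxne : x ≠ 0 := by
      intro h0
      apply hne
      have : (1 - τ) / lam * θ = τ := by linarith [hx ▸ h0]
      rw [hϑ]
      field_simp at this ⊢
      linarith [this]
    have hexpx : x + 1 < Real.exp x := Real.add_one_lt_exp hxne
    have hid : (1 - τ) * (lam + θ) = lam * (1 + x) := by
      rw [hx]; field_simp; ring
    rw [hval, hform θ hθ]
    have hlθ : 0 < lam + θ := by linarith
    have hcθ : (1 - τ) / lam * θ = x + τ := by rw [hx]; ring
    rw [hcθ, Real.exp_add]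
    have hE : 0 < Real.exp τ := Real.exp_pos τ
    have hX : 0 < Real.exp x := Real.exp_pos x
    rw [show Real.exp x * Real.exp τ * (lam / (lam + θ))
        = Real.exp x * Real.exp τ * lam / (lam + θ) by ring, lt_div_iff₀ hlθ]
    calc (1 - τ) * Real.exp τ * (lam + θ) = lam * (1 + x) * Real.exp τ := by
          linear_combination Real.exp τ * hid
      _ < lam * Real.exp x * Real.exp τ := by
          have : lam * (1 + x) < lam * Real.exp x :=
            mul_lt_mul_of_pos_left (by linarith) hlam
          exact mul_lt_mul_of_pos_right this hE
      _ = Real.exp x * Real.exp τ * lam := by ring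
  have hmin : ∀ θ : ℝ, 0 ≤ θ → φ ϑ ≤ φ θ := by
    intro θ hθ
    rcases eq_or_ne θ ϑ with rfl | hne
    · exact le_rfl
    · exact (hkey θ hθ hne).le
  refine ⟨hform, hmin, ?_, ?_, ?_, ?_⟩
  · intro θ hθ hmin'
    by_contra hne
    exact absurd (hmin' ϑ hϑ0.le) (not_le.mpr (hkey θ hθ hne))
  · have hleast : IsLeast (φ '' Set.Ici (0 : ℝ)) ((1 - τ) * Real.exp τ) := by
      constructor
      · exact ⟨ϑ, hϑ0.le, hval⟩
      · rintro y ⟨θ, hθ, rfl⟩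
        rw [← hval]; exact hmin θ hθ
    exact hleast.csInf_eq
  · positivity
  · have := Real.add_one_lt_exp (show -τ ≠ 0 by simpa using hτ0.ne')
    have hE : (0:ℝ) < Real.exp τ := Real.exp_pos τ
    have h1 : Real.exp (-τ) * Real.exp τ = 1 := by
      rw [← Real.exp_add]; simp
    nlinarith
end
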